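/- For a commutative non-autonomous system (X, f_{1,∞}), the following are equivalent: (1) (X, f_{1,∞}) is weakly mixing; (2) the induced system (K(X), f̄_{1,∞}) on the hyperspace of non-empty compact subsets is weakly mixing; (3) the induced hyperspace system (K(X), f̄_{1,∞}) is topologically transitive. -/

import Mathlib

open Set Filter MeasureTheory TopologicalSpace

/-- `iterN f n = f_{n-1} ∘ ⋯ ∘ f_0`, the `n`-th iterate of the non-autonomous system. -/
def iterN {X : Type*} (f : ℕ → X → X) : ℕ → X → X
  | 0 => id
  | n + 1 => f n ∘ iterN f n

/-- Topological transitivity of a non-autonomous system. -/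
def NATransitive {X : Type*} [TopologicalSpace X] (f : ℕ → X → X) : Prop :=
  ∀ U V : Set X, IsOpen U → IsOpen V → U.Nonempty → V.Nonempty →
    ∃ n : ℕ, 0 < n ∧ (iterN f n '' U ∩ V).Nonempty

/-- Weak mixing (order 2). -/
def NAWeaklyMixing {X : Type*} [TopologicalSpace X] (f : ℕ → X → X) : Prop :=
  ∀ U₁ U₂ V₁ V₂ : Set X, IsOpen U₁ → IsOpen U₂ → IsOpen V₁ → IsOpen V₂ →
    U₁.Nonempty → U₂.Nonempty → V₁.Nonempty → V₂.Nonempty →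
    ∃ n : ℕ, 0 < n ∧ (iterN f n '' U₁ ∩ V₁).Nonempty ∧ (iterN f n '' U₂ ∩ V₂).Nonempty

/-- Weak mixing of order `m`. -/
def NAWeaklyMixingOrder {X : Type*} [TopologicalSpace X] (f : ℕ → X → X) (m : ℕ) : Prop :=
  ∀ U V : Fin m → Set X, (∀ i, IsOpen (U i)) → (∀ i, IsOpen (V i)) →
    (∀ i, (U i).Nonempty) → (∀ i, (V i).Nonempty) →
    ∃ n : ℕ, 0 < n ∧ ∀ i, (iterN f n '' U i ∩ V i).Nonempty

/-- Banks's condition. -/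
def NABanks {X : Type*} [TopologicalSpace X] (f : ℕ → X → X) : Prop :=
  ∀ U V W : Set X, IsOpen U → IsOpen V → IsOpen W →
    U.Nonempty → V.Nonempty → W.Nonempty →
    ∃ n : ℕ, 0 < n ∧ (iterN f n '' U ∩ V).Nonempty ∧ (iterN f n '' U ∩ W).Nonempty

/-- Topological mixing. -/
def NAMixing {X : Type*} [TopologicalSpace X] (f : ℕ → X → X) : Prop :=
  ∀ U V : Set X, IsOpen U → IsOpen V → U.Nonempty → V.Nonempty →
    ∃ N : ℕ, ∀ n ≥ N, (iterN f n '' U ∩ V).Nonempty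

/-- `blockC f s k = f_{s+k-1} ∘ ⋯ ∘ f_s`. -/
def blockC {X : Type*} (f : ℕ → X → X) (s k : ℕ) : X → X :=
  iterN (fun i => f (s + i)) k

/-- The `k`-th iterate system `f_{1,∞}^{[k]}`. -/
def kthSys {X : Type*} (f : ℕ → X → X) (k : ℕ) : ℕ → X → X :=
  fun n => blockC f (n * k) k

/-- The induced non-autonomous system on Borel probability measures (pushforwards). -/
noncomputable def inducedM {X : Type*} [MeasurableSpace X] [TopologicalSpace X]
    [BorelSpace X] (f : ℕ → X → X) (hf : ∀ n, Continuous (f n)) :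
    ℕ → ProbabilityMeasure X → ProbabilityMeasure X :=
  fun n μ => μ.map ((hf n).measurable.aemeasurable)

/-- The induced non-autonomous system on the hyperspace of non-empty compact subsets. -/
def inducedK {X : Type*} [TopologicalSpace X] (f : ℕ → X → X) (hf : ∀ n, Continuous (f n)) :
    ℕ → NonemptyCompacts X → NonemptyCompacts X :=
  fun n K => ⟨⟨f n '' (K : Set X), K.isCompact.image (hf n)⟩, K.nonempty.image _⟩

/-- The set `N(U, δ)` of sensitivity times. -/
def NSet {X : Type*} [PseudoMetricSpace X] (f : ℕ → X → X) (U : Set X) (δ : ℝ) : Set ℕ :=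
  {n | 0 < n ∧ ∃ x ∈ U, ∃ y ∈ U, δ < dist (iterN f n x) (iterN f n y)}

/-- Sensitive dependence on initial conditions. -/
def NASensitive {X : Type*} [PseudoMetricSpace X] (f : ℕ → X → X) : Prop :=
  ∃ δ : ℝ, 0 < δ ∧ ∀ x : X, ∀ U : Set X, IsOpen U → x ∈ U →
    ∃ y ∈ U, ∃ n : ℕ, 0 < n ∧ δ < dist (iterN f n x) (iterN f n y)

/-- A thick subset of ℕ. -/
def ThickSet (S : Set ℕ) : Prop := ∀ p : ℕ, ∃ n : ℕ, ∀ j ≤ p, n + j ∈ S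

/-- A syndetic subset of ℕ. -/
def SyndeticSet (S : Set ℕ) : Prop := ∃ a : ℕ, ∀ i : ℕ, ∃ j, i ≤ j ∧ j ≤ i + a ∧ j ∈ S

/-- Upper density of a subset of ℕ. -/
noncomputable def upperDens (S : Set ℕ) : ℝ :=
  Filter.limsup (fun n : ℕ => (Nat.card ↥(S ∩ Set.Iio n) : ℝ) / n) Filter.atTop

/-- Periodic point of a non-autonomous system. -/
def NAPeriodicPt {X : Type*} (f : ℕ → X → X) (x : X) : Prop :=
  ∃ n : ℕ, 0 < n ∧ ∀ k : ℕ, 0 < k → iterN f (n * k) x = x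

namespace HypAux

variable {X : Type*}

theorem iterN_continuous [TopologicalSpace X] {f : ℕ → X → X} (hf : ∀ n, Continuous (f n)) :
    ∀ n, Continuous (iterN f n)
  | 0 => continuous_id
  | n + 1 => (hf n).comp (iterN_continuous hf n)

theorem comm_f_iterN {f : ℕ → X → X} (hc : ∀ i j, f i ∘ f j = f j ∘ f i) (j : ℕ) :
    ∀ n (x : X), f j (iterN f n x) = iterN f n (f j x)
  | 0, x => rfl
  | n + 1, x => by
    show f j (f n (iterN f n x)) = f n (iterN f n (f j x))
    rw [← comm_f_iterN hc j n x]
    exact congrFun (hc j n) (iterN f n x)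

theorem comm_iterN_iterN {f : ℕ → X → X} (hc : ∀ i j, f i ∘ f j = f j ∘ f i) :
    ∀ m k (x : X), iterN f m (iterN f k x) = iterN f k (iterN f m x)
  | 0, k, x => rfl
  | m + 1, k, x => by
    show f m (iterN f m (iterN f k x)) = iterN f k (f m (iterN f m x))
    rw [comm_iterN_iterN hc m k x, comm_f_iterN hc m k]

theorem inducedK_iter_coe [TopologicalSpace X] (f : ℕ → X → X) (hf : ∀ n, Continuous (f n)) :
    ∀ (n : ℕ) (K : NonemptyCompacts X),
      (↑(iterN (inducedK f hf) n K) : Set X) = iterN f n '' (K : Set X)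
  | 0, K => by simp [iterN]
  | n + 1, K => by
    show (↑(inducedK f hf n (iterN (inducedK f hf) n K)) : Set X) = iterN f (n + 1) '' (K : Set X)
    show f n '' (↑(iterN (inducedK f hf) n K) : Set X) = (f n ∘ iterN f n) '' (K : Set X)
    rw [inducedK_iter_coe f hf n K, Set.image_comp]


theorem trans_of_wm [TopologicalSpace X] {g : ℕ → X → X} (h : NAWeaklyMixing g) :
    NATransitive g := by
  intro U V hU hV hUne hVne
  obtain ⟨n, hn, h1, _⟩ := h U U V V hU hU hV hV hUne hUne hVne hVne
  exact ⟨n, hn, h1⟩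

theorem wm_list [TopologicalSpace X] {f : ℕ → X → X} (hf : ∀ n, Continuous (f n))
    (hc : ∀ i j, f i ∘ f j = f j ∘ f i) (h : NAWeaklyMixing f) :
    ∀ L : List (Set X × Set X),
      (∀ p ∈ L, IsOpen p.1 ∧ IsOpen p.2 ∧ p.1.Nonempty ∧ p.2.Nonempty) →
      ∀ U V : Set X, IsOpen U → IsOpen V → U.Nonempty → V.Nonempty →
      ∃ n, 0 < n ∧ (iterN f n '' U ∩ V).Nonempty ∧
        ∀ p ∈ L, (iterN f n '' p.1 ∩ p.2).Nonempty := by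
  intro L
  induction L with
  | nil =>
    intro _ U V hU hV hUne hVne
    obtain ⟨n, hn, h1, _⟩ := h U U V V hU hU hV hV hUne hUne hVne hVne
    exact ⟨n, hn, h1, by simp⟩
  | cons p L ih =>
    intro hL U V hU hV hUne hVne
    obtain ⟨hU', hV', hU'ne, hV'ne⟩ := hL p List.mem_cons_self
    obtain ⟨m, _, h1, h2⟩ := h U V p.1 p.2 hU hV hU' hV' hUne hVne hU'ne hV'ne
    obtain ⟨y₁, ⟨x₁, hx₁U, rfl⟩, hy₁⟩ := h1
    obtain ⟨y₂, ⟨x₂, hx₂V, rfl⟩, hy₂⟩ := h2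
    set T := iterN f m with hT
    have hTc : Continuous T := iterN_continuous hf m
    obtain ⟨k, hk, ⟨z, ⟨x, ⟨hxU, hxp⟩, rfl⟩, hzV, hzp⟩, hrest⟩ :=
      ih (fun q hq => hL q (List.mem_cons_of_mem p hq)) (U ∩ T ⁻¹' p.1) (V ∩ T ⁻¹' p.2)
        (hU.inter (hU'.preimage hTc)) (hV.inter (hV'.preimage hTc))
        ⟨x₁, hx₁U, hy₁⟩ ⟨x₂, hx₂V, hy₂⟩
    refine ⟨k, hk, ⟨iterN f k x, ⟨x, hxU, rfl⟩, hzV⟩, ?_⟩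
    intro q hq
    rcases List.mem_cons.1 hq with hq | hq
    · subst hq
      refine ⟨iterN f k (T x), ⟨T x, hxp, rfl⟩, ?_⟩
      rw [hT, comm_iterN_iterN hc k m x]
      exact hzp
    · exact hrest q hq

theorem wm_finite [TopologicalSpace X] {f : ℕ → X → X} (hf : ∀ n, Continuous (f n))
    (hc : ∀ i j, f i ∘ f j = f j ∘ f i) (h : NAWeaklyMixing f)
    (S : Set (Set X × Set X)) (hSfin : S.Finite)
    (hS : ∀ p ∈ S, IsOpen p.1 ∧ IsOpen p.2 ∧ p.1.Nonempty ∧ p.2.Nonempty) :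
    ∃ n, 0 < n ∧ ∀ p ∈ S, (iterN f n '' p.1 ∩ p.2).Nonempty := by
  rcases S.eq_empty_or_nonempty with rfl | ⟨p₀, hp₀⟩
  · exact ⟨1, one_pos, by simp⟩
  · obtain ⟨hU, hV, hUne, hVne⟩ := hS p₀ hp₀
    obtain ⟨n, hn, _, hall⟩ := wm_list hf hc h hSfin.toFinset.toList
      (fun p hp => hS p (by simpa using hp)) p₀.1 p₀.2 hU hV hUne hVne
    exact ⟨n, hn, fun p hp => hall p (by simpa using hp)⟩

theorem banks_wm [TopologicalSpace X] {f : ℕ → X → X} (hf : ∀ n, Continuous (f n))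
    (hc : ∀ i j, f i ∘ f j = f j ∘ f i) (h : NABanks f) : NAWeaklyMixing f := by
  intro A B C D hA hB hC hD hAne hBne hCne hDne
  obtain ⟨m, _, h1, h2⟩ := h B A C hB hA hC hBne hAne hCne
  set T := iterN f m with hT
  have hTc : Continuous T := iterN_continuous hf m
  obtain ⟨y₁, ⟨x₁, hx₁, rfl⟩, hy₁⟩ := h1
  obtain ⟨y₂, ⟨x₂, hx₂, rfl⟩, hy₂⟩ := h2
  obtain ⟨k, hk, g1, g2⟩ := h (B ∩ T ⁻¹' A) (B ∩ T ⁻¹' C) D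
    (hB.inter (hA.preimage hTc)) (hB.inter (hC.preimage hTc)) hD
    ⟨x₁, hx₁, hy₁⟩ ⟨x₂, hx₂, hy₂⟩ hDne
  obtain ⟨z, ⟨x, ⟨hxB, hxA⟩, rfl⟩, hzB, hzC⟩ := g1
  obtain ⟨w, ⟨x', ⟨hx'B, _⟩, rfl⟩, hwD⟩ := g2
  refine ⟨k, hk, ⟨iterN f k (T x), ⟨T x, hxA, rfl⟩, ?_⟩, ⟨iterN f k x', ⟨x', hx'B, rfl⟩, hwD⟩⟩
  rw [hT, comm_iterN_iterN hc k m x]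
  exact hzC


section Metric
variable [MetricSpace X]

theorem edist_ne_top' (K L : NonemptyCompacts X) :
    EMetric.hausdorffEdist (K : Set X) (L : Set X) ≠ ⊤ :=
  Metric.hausdorffEdist_ne_top_of_nonempty_of_bounded K.nonempty L.nonempty
    K.isCompact.isBounded L.isCompact.isBounded

theorem isOpen_subsets {U : Set X} (hU : IsOpen U) :
    IsOpen {K : NonemptyCompacts X | (K : Set X) ⊆ U} := by
  rw [Metric.isOpen_iff]
  intro K hK
  obtain ⟨δ, hδ, hsub⟩ := K.isCompact.exists_thickening_subset_open hU hK
  refine ⟨δ, hδ, fun L hL => ?_⟩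
  intro x hx
  have hd : Metric.hausdorffDist (L : Set X) (K : Set X) < δ := by
    rw [← Metric.NonemptyCompacts.dist_eq]
    exact Metric.mem_ball.1 hL
  obtain ⟨y, hy, hxy⟩ := Metric.exists_dist_lt_of_hausdorffDist_lt hx hd (edist_ne_top' L K)
  exact hsub (Metric.mem_thickening_iff.2 ⟨y, hy, hxy⟩)

theorem isOpen_meets {V : Set X} (hV : IsOpen V) :
    IsOpen {K : NonemptyCompacts X | ((K : Set X) ∩ V).Nonempty} := by
  rw [Metric.isOpen_iff]
  intro K hK
  obtain ⟨x, hxK, hxV⟩ := hK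
  obtain ⟨δ, hδ, hball⟩ := Metric.isOpen_iff.1 hV x hxV
  refine ⟨δ, hδ, fun L hL => ?_⟩
  have hd : Metric.hausdorffDist (K : Set X) (L : Set X) < δ := by
    rw [← Metric.NonemptyCompacts.dist_eq, dist_comm]
    exact Metric.mem_ball.1 hL
  obtain ⟨y, hyL, hxy⟩ := Metric.exists_dist_lt_of_hausdorffDist_lt hxK hd (edist_ne_top' K L)
  exact ⟨y, hyL, hball (by rw [Metric.mem_ball, dist_comm]; exact hxy)⟩

theorem trans_banks {f : ℕ → X → X} (hf : ∀ n, Continuous (f n))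
    (h : NATransitive (inducedK f hf)) : NABanks f := by
  intro U V W hU hV hW hUne hVne hWne
  obtain ⟨u, hu⟩ := hUne
  obtain ⟨v, hv⟩ := hVne
  obtain ⟨w, hw⟩ := hWne
  have hopen : IsOpen ({K : NonemptyCompacts X | ((K : Set X) ∩ V).Nonempty} ∩
      {K : NonemptyCompacts X | ((K : Set X) ∩ W).Nonempty}) :=
    (isOpen_meets hV).inter (isOpen_meets hW)
  have hVW : ({v, w} : Set X).Finite := Set.toFinite _
  obtain ⟨n, hn, L, ⟨K, hK, rfl⟩, hL1, hL2⟩ :=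
    h {K : NonemptyCompacts X | (K : Set X) ⊆ U} _ (isOpen_subsets hU) hopen
      ⟨⟨⟨{u}, isCompact_singleton⟩, ⟨u, rfl⟩⟩, by
        exact Set.singleton_subset_iff.2 hu⟩
      ⟨⟨⟨{v, w}, hVW.isCompact⟩, ⟨v, by simp⟩⟩,
        ⟨v, by exact Set.mem_insert v {w}, hv⟩, ⟨w, by exact Set.mem_insert_of_mem v (Set.mem_singleton w), hw⟩⟩
  rw [Set.mem_setOf_eq, inducedK_iter_coe f hf n K] at hL1 hL2
  obtain ⟨y₁, ⟨x₁, hx₁, rfl⟩, hy₁⟩ := hL1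
  obtain ⟨y₂, ⟨x₂, hx₂, rfl⟩, hy₂⟩ := hL2
  exact ⟨n, hn, ⟨iterN f n x₁, ⟨x₁, hK hx₁, rfl⟩, hy₁⟩,
    ⟨iterN f n x₂, ⟨x₂, hK hx₂, rfl⟩, hy₂⟩⟩

end Metric


section Main
variable [MetricSpace X]

theorem build_K {f : ℕ → X → X} (hf : ∀ n, Continuous (f n)) (n : ℕ)
    (A B : NonemptyCompacts X) {ε : ℝ} (hε : 0 < ε)
    {tA tB : Set X} (htAfin : tA.Finite) (htBfin : tB.Finite)
    (htA : tA ⊆ (A : Set X)) (htB : tB ⊆ (B : Set X))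
    (hcovA : (A : Set X) ⊆ ⋃ x ∈ tA, Metric.ball x (ε / 4))
    (hcovB : (B : Set X) ⊆ ⋃ x ∈ tB, Metric.ball x (ε / 4))
    (hpt : ∀ a ∈ tA, ∀ b ∈ tB, ∃ x, dist x a < ε / 4 ∧ dist (iterN f n x) b < ε / 4) :
    ∃ K : NonemptyCompacts X, dist K A < ε ∧ dist (iterN (inducedK f hf) n K) B < ε := by
  obtain ⟨a₀, ha₀⟩ := A.nonempty
  obtain ⟨b₀, hb₀⟩ := B.nonempty
  obtain ⟨a₁, ha₁, -⟩ := Set.mem_iUnion₂.1 (hcovA ha₀)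
  obtain ⟨b₁, hb₁, -⟩ := Set.mem_iUnion₂.1 (hcovB hb₀)
  have hch : ∀ p : X × X, ∃ x, p ∈ tA ×ˢ tB →
      dist x p.1 < ε / 4 ∧ dist (iterN f n x) p.2 < ε / 4 := by
    intro p
    by_cases hp : p ∈ tA ×ˢ tB
    · obtain ⟨x, hx⟩ := hpt p.1 hp.1 p.2 hp.2
      exact ⟨x, fun _ => hx⟩
    · exact ⟨a₀, fun h => absurd h hp⟩
  choose g hg using hch
  have hK₀fin : (g '' (tA ×ˢ tB)).Finite := (htAfin.prod htBfin).image g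
  have hK₀ne : (g '' (tA ×ˢ tB)).Nonempty := ⟨g (a₁, b₁), ⟨(a₁, b₁), ⟨ha₁, hb₁⟩, rfl⟩⟩
  refine ⟨⟨⟨g '' (tA ×ˢ tB), hK₀fin.isCompact⟩, hK₀ne⟩, ?_, ?_⟩
  · rw [Metric.NonemptyCompacts.dist_eq]
    refine lt_of_le_of_lt (Metric.hausdorffDist_le_of_mem_dist (by positivity) ?_ ?_)
      (by linarith : ε / 2 < ε)
    · rintro y ⟨⟨a, b⟩, hab, rfl⟩
      exact ⟨a, htA hab.1, le_of_lt (lt_of_lt_of_le (hg _ hab).1 (by linarith))⟩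
    · intro x hx
      obtain ⟨a, ha, hxa⟩ := Set.mem_iUnion₂.1 (hcovA hx)
      refine ⟨g (a, b₁), ⟨(a, b₁), ⟨ha, hb₁⟩, rfl⟩, ?_⟩
      have h1 : dist x a < ε / 4 := Metric.mem_ball.1 hxa
      have h2 : dist (g (a, b₁)) a < ε / 4 := (hg _ ⟨ha, hb₁⟩).1
      calc dist x (g (a, b₁)) ≤ dist x a + dist a (g (a, b₁)) := dist_triangle _ _ _
        _ ≤ ε / 2 := by rw [dist_comm a]; linarith
  · rw [Metric.NonemptyCompacts.dist_eq, inducedK_iter_coe]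
    refine lt_of_le_of_lt (Metric.hausdorffDist_le_of_mem_dist (by positivity) ?_ ?_)
      (by linarith : ε / 2 < ε)
    · rintro y ⟨z, ⟨⟨a, b⟩, hab, rfl⟩, rfl⟩
      exact ⟨b, htB hab.2, le_of_lt (lt_of_lt_of_le (hg _ hab).2 (by linarith))⟩
    · intro x hx
      obtain ⟨b, hb, hxb⟩ := Set.mem_iUnion₂.1 (hcovB hx)
      refine ⟨iterN f n (g (a₁, b)), ⟨g (a₁, b), ⟨(a₁, b), ⟨ha₁, hb⟩, rfl⟩, rfl⟩, ?_⟩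
      have h1 : dist x b < ε / 4 := Metric.mem_ball.1 hxb
      have h2 : dist (iterN f n (g (a₁, b))) b < ε / 4 := (hg _ ⟨ha₁, hb⟩).2
      calc dist x (iterN f n (g (a₁, b)))
          ≤ dist x b + dist b (iterN f n (g (a₁, b))) := dist_triangle _ _ _
        _ ≤ ε / 2 := by rw [dist_comm b]; linarith

theorem wm_K {f : ℕ → X → X} (hf : ∀ n, Continuous (f n))
    (hc : ∀ i j, f i ∘ f j = f j ∘ f i) (h : NAWeaklyMixing f) :
    NAWeaklyMixing (inducedK f hf) := by
  intro 𝒰₁ 𝒰₂ 𝒱₁ 𝒱₂ hO1 hO2 hO3 hO4 h1ne h2ne h3ne h4ne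
  obtain ⟨A₁, hA₁⟩ := h1ne
  obtain ⟨A₂, hA₂⟩ := h2ne
  obtain ⟨B₁, hB₁⟩ := h3ne
  obtain ⟨B₂, hB₂⟩ := h4ne
  obtain ⟨ε₁, hε₁, hb₁⟩ := Metric.isOpen_iff.1 hO1 A₁ hA₁
  obtain ⟨ε₂, hε₂, hb₂⟩ := Metric.isOpen_iff.1 hO2 A₂ hA₂
  obtain ⟨ε₃, hε₃, hb₃⟩ := Metric.isOpen_iff.1 hO3 B₁ hB₁
  obtain ⟨ε₄, hε₄, hb₄⟩ := Metric.isOpen_iff.1 hO4 B₂ hB₂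
  set ε : ℝ := min (min ε₁ ε₂) (min ε₃ ε₄) with hεdef
  have hε : 0 < ε := lt_min (lt_min hε₁ hε₂) (lt_min hε₃ hε₄)
  have hε4 : 0 < ε / 4 := by positivity
  obtain ⟨tA₁, htA₁s, htA₁f, htA₁c⟩ := A₁.isCompact.finite_cover_balls hε4
  obtain ⟨tA₂, htA₂s, htA₂f, htA₂c⟩ := A₂.isCompact.finite_cover_balls hε4
  obtain ⟨tB₁, htB₁s, htB₁f, htB₁c⟩ := B₁.isCompact.finite_cover_balls hε4
  obtain ⟨tB₂, htB₂s, htB₂f, htB₂c⟩ := B₂.isCompact.finite_cover_balls hε4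
  set S : Set (Set X × Set X) :=
    (fun p : X × X => (Metric.ball p.1 (ε / 4), Metric.ball p.2 (ε / 4))) ''
      (tA₁ ×ˢ tB₁ ∪ tA₂ ×ˢ tB₂) with hSdef
  have hSfin : S.Finite := (((htA₁f.prod htB₁f).union (htA₂f.prod htB₂f)).image _)
  have hSprop : ∀ p ∈ S, IsOpen p.1 ∧ IsOpen p.2 ∧ p.1.Nonempty ∧ p.2.Nonempty := by
    rintro p ⟨⟨a, b⟩, -, rfl⟩
    exact ⟨Metric.isOpen_ball, Metric.isOpen_ball,
      ⟨a, Metric.mem_ball_self hε4⟩, ⟨b, Metric.mem_ball_self hε4⟩⟩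
  obtain ⟨n, hn, hall⟩ := wm_finite hf hc h S hSfin hSprop
  have hpt : ∀ t₁ t₂ : Set X, t₁ ×ˢ t₂ ⊆ tA₁ ×ˢ tB₁ ∪ tA₂ ×ˢ tB₂ →
      ∀ a ∈ t₁, ∀ b ∈ t₂, ∃ x, dist x a < ε / 4 ∧ dist (iterN f n x) b < ε / 4 := by
    intro t₁ t₂ hsub a ha b hb
    obtain ⟨y, ⟨x, hx, rfl⟩, hy⟩ := hall (Metric.ball a (ε / 4), Metric.ball b (ε / 4))
      ⟨(a, b), hsub ⟨ha, hb⟩, rfl⟩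
    exact ⟨x, by rw [← Metric.mem_ball]; exact hx, by rw [← Metric.mem_ball]; exact hy⟩
  obtain ⟨K₁, hK₁, hK₁'⟩ := build_K hf n A₁ B₁ hε htA₁f htB₁f htA₁s htB₁s htA₁c htB₁c
    (hpt tA₁ tB₁ Set.subset_union_left)
  obtain ⟨K₂, hK₂, hK₂'⟩ := build_K hf n A₂ B₂ hε htA₂f htB₂f htA₂s htB₂s htA₂c htB₂c
    (hpt tA₂ tB₂ Set.subset_union_right)
  refine ⟨n, hn, ⟨iterN (inducedK f hf) n K₁, ⟨K₁, ?_, rfl⟩, ?_⟩,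
    ⟨iterN (inducedK f hf) n K₂, ⟨K₂, ?_, rfl⟩, ?_⟩⟩
  · exact hb₁ (Metric.mem_ball.2 (lt_of_lt_of_le hK₁ ((min_le_left _ _).trans (min_le_left _ _))))
  · exact hb₃ (Metric.mem_ball.2 (lt_of_lt_of_le hK₁' ((min_le_right _ _).trans (min_le_left _ _))))
  · exact hb₂ (Metric.mem_ball.2 (lt_of_lt_of_le hK₂ ((min_le_left _ _).trans (min_le_right _ _))))
  · exact hb₄ (Metric.mem_ball.2 (lt_of_lt_of_le hK₂' ((min_le_right _ _).trans (min_le_right _ _))))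

end Main

end HypAux

/-- for a commutative non-autonomous system, weak mixing of the base system,
weak mixing of the induced hyperspace system on `K(X)`, and transitivity of the induced
hyperspace system are all equivalent. -/
theorem commutative_weaklyMixing_tfae_hyperspace {X : Type*} [MetricSpace X] [CompactSpace X]
    (f : ℕ → X → X) (hf : ∀ n, Continuous (f n))
    (hc : ∀ i j, f i ∘ f j = f j ∘ f i) :
    (NAWeaklyMixing f ↔ NAWeaklyMixing (inducedK f hf)) ∧
      (NAWeaklyMixing (inducedK f hf) ↔ NATransitive (inducedK f hf)) := by
  refine ⟨⟨fun h => HypAux.wm_K hf hc h,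
      fun h => HypAux.banks_wm hf hc (HypAux.trans_banks hf (HypAux.trans_of_wm h))⟩,
    ⟨fun h => HypAux.trans_of_wm h,
      fun h => HypAux.wm_K hf hc (HypAux.banks_wm hf hc (HypAux.trans_banks hf h))⟩⟩
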